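/- Approximation guarantee of the Sinkhorn algorithm for M = 2: let δ > 0, assume m1·m2²·m3 ≥ 2, max(‖C^(1)‖_∞, ‖C^(2)‖_∞) > 0, and set ε := δ/(2·log(m1·m2²·m3)). Suppose n ∈ ℕ satisfies the stopping criterion S_n ≤ δ/(16·max(‖C^(1)‖_∞, ‖C^(2)‖_∞)). Define ρ := Σ of all entries of diag(u^(n,1)) K^(1) diag(1/u^(n+1,2)), P^(n+0.5,1) := diag(u^(n,1)/ρ) K^(1) diag(1/u^(n+1,2)), P^(n+0.5,2) := diag(u^(n+1,2)) K^(2) diag(u^(n,3)/ρ), a' := P^(n+0.5,1)1_{m2}, and b' := (P^(n+0.5,2))ᵀ1_{m2}. Let P̃^(1) ∈ ℝ_{≥0}^{m1×m2} and P̃^(2) ∈ ℝ_{≥0}^{m2×m3} be any feasible pair (P̃^(1)1_{m2} = a, (P̃^(2))ᵀ1_{m2} = b, (P̃^(1))ᵀ1_{m1} = P̃^(2)1_{m3}) satisfying ‖P̃^(1) − P^(n+0.5,1)‖₁ ≤ 2‖a − a'‖₁ and ‖P̃^(2) − P^(n+0.5,2)‖₁ ≤ 2‖b − b'‖₁. Then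 ⟨C^(1), P̃^(1)⟩ + ⟨C^(2), P̃^(2)⟩ ≤ min over all feasible pairs (P^(1), P^(2)) of (⟨C^(1), P^(1)⟩ + ⟨C^(2), P^(2)⟩) + δ. -/

import Mathlib

open Matrix Finset Real

noncomputable section

/-- The Hilbert projective (pseudo)metric on the positive orthant:
`d_H(u,v) = log((max_i u_i/v_i) · (max_j v_j/u_j))`. -/
def dH {m : ℕ} (u v : Fin m → ℝ) : ℝ :=
  Real.log ((⨆ i, u i / v i) * (⨆ j, v j / u j))

/-- Birkhoff's ratio `γ(A) = max_{i,j,k,l} (A_{ik}A_{jl})/(A_{jk}A_{il})`. -/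
def birkhoffGamma {n m : ℕ} (A : Matrix (Fin n) (Fin m) ℝ) : ℝ :=
  ⨆ p : (Fin n × Fin n) × Fin m × Fin m,
    A p.1.1 p.2.1 * A p.1.2 p.2.2 / (A p.1.2 p.2.1 * A p.1.1 p.2.2)

/-- Birkhoff's contraction coefficient `λ(A) = (√γ(A) − 1)/(√γ(A) + 1)`. -/
def birkhoffLambda {n m : ℕ} (A : Matrix (Fin n) (Fin m) ℝ) : ℝ :=
  (Real.sqrt (birkhoffGamma A) - 1) / (Real.sqrt (birkhoffGamma A) + 1)

/-- The dual (Lagrangian) function for the sequentially composed OT problem with `M = 2`. -/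
def dual2 {m1 m2 m3 : ℕ} (a : Fin m1 → ℝ) (b : Fin m3 → ℝ) (ε : ℝ)
    (C1 : Matrix (Fin m1) (Fin m2) ℝ) (C2 : Matrix (Fin m2) (Fin m3) ℝ)
    (f1 : Fin m1 → ℝ) (f2 : Fin m2 → ℝ) (f3 : Fin m3 → ℝ) : ℝ :=
  (∑ j, f1 j * a j) + (∑ l, f3 l * b l)
    - ε * ((∑ j, ∑ k, Real.exp ((f1 j - f2 k - C1 j k) / ε))
      + ∑ k, ∑ l, Real.exp ((f2 k + f3 l - C2 k l) / ε))

/-- The matrix `diag(u) K diag(1/v)` induced by the first pair of Sinkhorn vectors. -/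
def indMat1 {m1 m2 : ℕ} (u : Fin m1 → ℝ) (K : Matrix (Fin m1) (Fin m2) ℝ)
    (v : Fin m2 → ℝ) : Matrix (Fin m1) (Fin m2) ℝ :=
  Matrix.diagonal u * K * Matrix.diagonal (fun k => (v k)⁻¹)

/-- The matrix `diag(v) K diag(w)` induced by the second pair of Sinkhorn vectors. -/
def indMat2 {m2 m3 : ℕ} (v : Fin m2 → ℝ) (K : Matrix (Fin m2) (Fin m3) ℝ)
    (w : Fin m3 → ℝ) : Matrix (Fin m2) (Fin m3) ℝ :=
  Matrix.diagonal v * K * Matrix.diagonal w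

/-- The sup-norm `‖X‖_∞` of a matrix: the maximum absolute value of its entries. -/
def linf {m n : ℕ} (X : Matrix (Fin m) (Fin n) ℝ) : ℝ := ⨆ p : Fin m × Fin n, |X p.1 p.2|


lemma gibbs_pt {x y : ℝ} (hx : 0 ≤ x) (hy : 0 < y) :
    x - y ≤ x * Real.log x - x * Real.log y := by
  rcases eq_or_lt_of_le hx with h|h
  · simp [← h]; linarith
  · have h1 : Real.log (y / x) ≤ y / x - 1 := Real.log_le_sub_one_of_pos (by positivity)
    have h2 : Real.log (y / x) = Real.log y - Real.log x :=
      Real.log_div (ne_of_gt hy) (ne_of_gt h)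
    have h3 : x * Real.log (y / x) ≤ x * (y / x - 1) :=
      mul_le_mul_of_nonneg_left h1 h.le
    have h4 : x * (y / x) = y := by field_simp
    nlinarith

lemma sum_mul_diff_le {m n : ℕ} (C X Y : Matrix (Fin m) (Fin n) ℝ) (M e : ℝ)
    (hM : 0 ≤ M) (hC : ∀ j k, |C j k| ≤ M)
    (he : (∑ j, ∑ k, |X j k - Y j k|) ≤ e) :
    (∑ j, ∑ k, C j k * X j k) ≤ (∑ j, ∑ k, C j k * Y j k) + M * e := by
  have h1 : (∑ j, ∑ k, C j k * X j k) - (∑ j, ∑ k, C j k * Y j k)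
      = ∑ j, ∑ k, C j k * (X j k - Y j k) := by
    rw [← Finset.sum_sub_distrib]
    exact Finset.sum_congr rfl fun j _ => by
      rw [← Finset.sum_sub_distrib]
      exact Finset.sum_congr rfl fun k _ => by ring
  have h2 : ∑ j, ∑ k, C j k * (X j k - Y j k) ≤ M * ∑ j, ∑ k, |X j k - Y j k| := by
    rw [Finset.mul_sum]
    refine Finset.sum_le_sum fun j _ => ?_
    rw [Finset.mul_sum]
    refine Finset.sum_le_sum fun k _ => ?_
    calc C j k * (X j k - Y j k) ≤ |C j k * (X j k - Y j k)| := le_abs_self _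
      _ = |C j k| * |X j k - Y j k| := abs_mul _ _
      _ ≤ M * |X j k - Y j k| := mul_le_mul_of_nonneg_right (hC j k) (abs_nonneg _)
  have h3 : M * (∑ j, ∑ k, |X j k - Y j k|) ≤ M * e := mul_le_mul_of_nonneg_left he hM
  linarith

lemma entropic_opt {m1 m2 m3 : ℕ}
    (ε : ℝ) (hεpos : 0 < ε)
    (C1 K1 Ph1 R1 : Matrix (Fin m1) (Fin m2) ℝ) (C2 K2 Ph2 R2 : Matrix (Fin m2) (Fin m3) ℝ)
    (α : Fin m1 → ℝ) (β : Fin m2 → ℝ) (η : Fin m3 → ℝ)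
    (hαpos : ∀ j, 0 < α j) (hβpos : ∀ k, 0 < β k) (hηpos : ∀ l, 0 < η l)
    (hK1pos : ∀ j k, 0 < K1 j k) (hK2pos : ∀ k l, 0 < K2 k l)
    (hC1K : ∀ j k, C1 j k = -(ε * Real.log (K1 j k)))
    (hC2K : ∀ k l, C2 k l = -(ε * Real.log (K2 k l)))
    (hPh1e : ∀ j k, Ph1 j k = α j * K1 j k * (β k)⁻¹)
    (hPh2e : ∀ k l, Ph2 k l = β k * K2 k l * η l)
    (hR1nn : ∀ j k, 0 ≤ R1 j k) (hR2nn : ∀ k l, 0 ≤ R2 k l)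
    (hR1marg : ∀ j, ∑ k, R1 j k = ∑ k, Ph1 j k)
    (hR2marg : ∀ l, ∑ k, R2 k l = ∑ k, Ph2 k l)
    (hPhmid : ∀ k, ∑ j, Ph1 j k = ∑ l, Ph2 k l)
    (hRmid : ∀ k, ∑ j, R1 j k = ∑ l, R2 k l) :
    (∑ j, ∑ k, C1 j k * Ph1 j k) + (∑ k, ∑ l, C2 k l * Ph2 k l)
      + ε * ((∑ j, ∑ k, Ph1 j k * Real.log (Ph1 j k))
        + (∑ k, ∑ l, Ph2 k l * Real.log (Ph2 k l)))
    ≤ (∑ j, ∑ k, C1 j k * R1 j k) + (∑ k, ∑ l, C2 k l * R2 k l)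
      + ε * ((∑ j, ∑ k, R1 j k * Real.log (R1 j k))
        + (∑ k, ∑ l, R2 k l * Real.log (R2 k l))) := by
  have hPh1pos : ∀ j k, 0 < Ph1 j k := by
    intro j k; rw [hPh1e]
    have := hαpos j; have := hK1pos j k; have := hβpos k; positivity
  have hPh2pos : ∀ k l, 0 < Ph2 k l := by
    intro k l; rw [hPh2e]
    have := hηpos l; have := hK2pos k l; have := hβpos k; positivity
  have hlog1 : ∀ j k, Real.log (Ph1 j k)
      = Real.log (α j) + Real.log (K1 j k) - Real.log (β k) := by
    intro j k
    rw [hPh1e j k, Real.log_mul (mul_pos (hαpos j) (hK1pos j k)).ne'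
        (inv_pos.mpr (hβpos k)).ne',
      Real.log_mul (hαpos j).ne' (hK1pos j k).ne', Real.log_inv]
    ring
  have hlog2 : ∀ k l, Real.log (Ph2 k l)
      = Real.log (β k) + Real.log (K2 k l) + Real.log (η l) := by
    intro k l
    rw [hPh2e k l, Real.log_mul (mul_pos (hβpos k) (hK2pos k l)).ne' (hηpos l).ne',
      Real.log_mul (hβpos k).ne' (hK2pos k l).ne']
  have key1 : ∀ X : Matrix (Fin m1) (Fin m2) ℝ,
      (∑ j, ∑ k, C1 j k * X j k) + ε * (∑ j, ∑ k, X j k * Real.log (X j k))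
      = ε * (∑ j, ∑ k, (X j k * Real.log (X j k) - X j k * Real.log (Ph1 j k)))
        + ε * (∑ j, (∑ k, X j k) * Real.log (α j))
        - ε * (∑ k, (∑ j, X j k) * Real.log (β k)) := by
    intro X
    have pe : ∀ j k, C1 j k * X j k + ε * (X j k * Real.log (X j k))
        = ε * (X j k * Real.log (X j k) - X j k * Real.log (Ph1 j k))
          + ε * (X j k * Real.log (α j)) - ε * (X j k * Real.log (β k)) := by
      intro j k; rw [hC1K j k, hlog1 j k]; ring
    calc (∑ j, ∑ k, C1 j k * X j k) + ε * (∑ j, ∑ k, X j k * Real.log (X j k))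
        = ∑ j, ∑ k, (C1 j k * X j k + ε * (X j k * Real.log (X j k))) := by
          simp only [Finset.sum_add_distrib, Finset.mul_sum]
      _ = ∑ j, ∑ k, (ε * (X j k * Real.log (X j k) - X j k * Real.log (Ph1 j k))
          + ε * (X j k * Real.log (α j)) - ε * (X j k * Real.log (β k))) :=
          Finset.sum_congr rfl fun j _ => Finset.sum_congr rfl fun k _ => pe j k
      _ = ε * (∑ j, ∑ k, (X j k * Real.log (X j k) - X j k * Real.log (Ph1 j k)))
          + ε * (∑ j, ∑ k, X j k * Real.log (α j))
          - ε * (∑ j, ∑ k, X j k * Real.log (β k)) := by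
          simp only [Finset.sum_add_distrib, Finset.sum_sub_distrib, Finset.mul_sum, mul_sub]
      _ = ε * (∑ j, ∑ k, (X j k * Real.log (X j k) - X j k * Real.log (Ph1 j k)))
          + ε * (∑ j, (∑ k, X j k) * Real.log (α j))
          - ε * (∑ k, (∑ j, X j k) * Real.log (β k)) := by
          have e2 : ∑ j, ∑ k, X j k * Real.log (α j)
              = ∑ j, (∑ k, X j k) * Real.log (α j) :=
            Finset.sum_congr rfl fun j _ => by rw [Finset.sum_mul]
          have e3 : ∑ j, ∑ k, X j k * Real.log (β k)
              = ∑ k, (∑ j, X j k) * Real.log (β k) := by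
            rw [Finset.sum_comm]
            exact Finset.sum_congr rfl fun k _ => by rw [Finset.sum_mul]
          rw [e2, e3]
  have key2 : ∀ Y : Matrix (Fin m2) (Fin m3) ℝ,
      (∑ k, ∑ l, C2 k l * Y k l) + ε * (∑ k, ∑ l, Y k l * Real.log (Y k l))
      = ε * (∑ k, ∑ l, (Y k l * Real.log (Y k l) - Y k l * Real.log (Ph2 k l)))
        + ε * (∑ k, (∑ l, Y k l) * Real.log (β k))
        + ε * (∑ l, (∑ k, Y k l) * Real.log (η l)) := by
    intro Y
    have pe : ∀ k l, C2 k l * Y k l + ε * (Y k l * Real.log (Y k l))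
        = ε * (Y k l * Real.log (Y k l) - Y k l * Real.log (Ph2 k l))
          + ε * (Y k l * Real.log (β k)) + ε * (Y k l * Real.log (η l)) := by
      intro k l; rw [hC2K k l, hlog2 k l]; ring
    calc (∑ k, ∑ l, C2 k l * Y k l) + ε * (∑ k, ∑ l, Y k l * Real.log (Y k l))
        = ∑ k, ∑ l, (C2 k l * Y k l + ε * (Y k l * Real.log (Y k l))) := by
          simp only [Finset.sum_add_distrib, Finset.mul_sum]
      _ = ∑ k, ∑ l, (ε * (Y k l * Real.log (Y k l) - Y k l * Real.log (Ph2 k l))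
          + ε * (Y k l * Real.log (β k)) + ε * (Y k l * Real.log (η l))) :=
          Finset.sum_congr rfl fun k _ => Finset.sum_congr rfl fun l _ => pe k l
      _ = ε * (∑ k, ∑ l, (Y k l * Real.log (Y k l) - Y k l * Real.log (Ph2 k l)))
          + ε * (∑ k, ∑ l, Y k l * Real.log (β k))
          + ε * (∑ k, ∑ l, Y k l * Real.log (η l)) := by
          simp only [Finset.sum_add_distrib, Finset.sum_sub_distrib, Finset.mul_sum, mul_sub]
      _ = ε * (∑ k, ∑ l, (Y k l * Real.log (Y k l) - Y k l * Real.log (Ph2 k l)))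
          + ε * (∑ k, (∑ l, Y k l) * Real.log (β k))
          + ε * (∑ l, (∑ k, Y k l) * Real.log (η l)) := by
          have e2 : ∑ k, ∑ l, Y k l * Real.log (β k)
              = ∑ k, (∑ l, Y k l) * Real.log (β k) :=
            Finset.sum_congr rfl fun k _ => by rw [Finset.sum_mul]
          have e3 : ∑ k, ∑ l, Y k l * Real.log (η l)
              = ∑ l, (∑ k, Y k l) * Real.log (η l) := by
            rw [Finset.sum_comm]
            exact Finset.sum_congr rfl fun l _ => by rw [Finset.sum_mul]
          rw [e2, e3]
  -- Gibbs inequality terms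
  have hmass1 : ∑ j, ∑ k, R1 j k = ∑ j, ∑ k, Ph1 j k :=
    Finset.sum_congr rfl fun j _ => hR1marg j
  have hmass2 : ∑ k, ∑ l, R2 k l = ∑ k, ∑ l, Ph2 k l := by
    have h1 : ∑ l, ∑ k, R2 k l = ∑ l, ∑ k, Ph2 k l :=
      Finset.sum_congr rfl fun l _ => hR2marg l
    calc ∑ k, ∑ l, R2 k l = ∑ l, ∑ k, R2 k l := Finset.sum_comm
      _ = ∑ l, ∑ k, Ph2 k l := h1
      _ = ∑ k, ∑ l, Ph2 k l := Finset.sum_comm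
  have gibbs1 : 0 ≤ ∑ j, ∑ k, (R1 j k * Real.log (R1 j k) - R1 j k * Real.log (Ph1 j k)) := by
    have h0 : ∑ j, ∑ k, (R1 j k - Ph1 j k) = 0 := by
      simp only [Finset.sum_sub_distrib]
      rw [hmass1]; ring
    calc (0:ℝ) = ∑ j, ∑ k, (R1 j k - Ph1 j k) := h0.symm
      _ ≤ ∑ j, ∑ k, (R1 j k * Real.log (R1 j k) - R1 j k * Real.log (Ph1 j k)) :=
        Finset.sum_le_sum fun j _ => Finset.sum_le_sum fun k _ =>
          gibbs_pt (hR1nn j k) (hPh1pos j k)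
  have gibbs2 : 0 ≤ ∑ k, ∑ l, (R2 k l * Real.log (R2 k l) - R2 k l * Real.log (Ph2 k l)) := by
    have h0 : ∑ k, ∑ l, (R2 k l - Ph2 k l) = 0 := by
      simp only [Finset.sum_sub_distrib]
      rw [hmass2]; ring
    calc (0:ℝ) = ∑ k, ∑ l, (R2 k l - Ph2 k l) := h0.symm
      _ ≤ ∑ k, ∑ l, (R2 k l * Real.log (R2 k l) - R2 k l * Real.log (Ph2 k l)) :=
        Finset.sum_le_sum fun k _ => Finset.sum_le_sum fun l _ =>
          gibbs_pt (hR2nn k l) (hPh2pos k l)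
  have zero1 : ∑ j, ∑ k, (Ph1 j k * Real.log (Ph1 j k) - Ph1 j k * Real.log (Ph1 j k)) = 0 := by
    simp
  have zero2 : ∑ k, ∑ l, (Ph2 k l * Real.log (Ph2 k l) - Ph2 k l * Real.log (Ph2 k l)) = 0 := by
    simp
  -- equalities of the linear terms
  have eqα : ε * (∑ j, (∑ k, R1 j k) * Real.log (α j))
      = ε * (∑ j, (∑ k, Ph1 j k) * Real.log (α j)) := by
    congr 1; exact Finset.sum_congr rfl fun j _ => by rw [hR1marg j]
  have eqη : ε * (∑ l, (∑ k, R2 k l) * Real.log (η l))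
      = ε * (∑ l, (∑ k, Ph2 k l) * Real.log (η l)) := by
    congr 1; exact Finset.sum_congr rfl fun l _ => by rw [hR2marg l]
  have eqβR : ε * (∑ k, (∑ j, R1 j k) * Real.log (β k))
      = ε * (∑ k, (∑ l, R2 k l) * Real.log (β k)) := by
    congr 1; exact Finset.sum_congr rfl fun k _ => by rw [hRmid k]
  have eqβPh : ε * (∑ k, (∑ j, Ph1 j k) * Real.log (β k))
      = ε * (∑ k, (∑ l, Ph2 k l) * Real.log (β k)) := by
    congr 1; exact Finset.sum_congr rfl fun k _ => by rw [hPhmid k]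
  have kP1 := key1 Ph1
  have kP2 := key2 Ph2
  have kR1 := key1 R1
  have kR2 := key2 R2
  have gm1 : 0 ≤ ε * ∑ j, ∑ k, (R1 j k * Real.log (R1 j k) - R1 j k * Real.log (Ph1 j k)) :=
    mul_nonneg hεpos.le gibbs1
  have gm2 : 0 ≤ ε * ∑ k, ∑ l, (R2 k l * Real.log (R2 k l) - R2 k l * Real.log (Ph2 k l)) :=
    mul_nonneg hεpos.le gibbs2
  have zm1 : ε * (∑ j, ∑ k, (Ph1 j k * Real.log (Ph1 j k) - Ph1 j k * Real.log (Ph1 j k))) = 0 := by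
    rw [zero1, mul_zero]
  have zm2 : ε * (∑ k, ∑ l, (Ph2 k l * Real.log (Ph2 k l) - Ph2 k l * Real.log (Ph2 k l))) = 0 := by
    rw [zero2, mul_zero]
  have ex1 : ε * ((∑ j, ∑ k, Ph1 j k * Real.log (Ph1 j k))
      + (∑ k, ∑ l, Ph2 k l * Real.log (Ph2 k l)))
      = ε * (∑ j, ∑ k, Ph1 j k * Real.log (Ph1 j k))
        + ε * (∑ k, ∑ l, Ph2 k l * Real.log (Ph2 k l)) := by ring
  have ex2 : ε * ((∑ j, ∑ k, R1 j k * Real.log (R1 j k))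
      + (∑ k, ∑ l, R2 k l * Real.log (R2 k l)))
      = ε * (∑ j, ∑ k, R1 j k * Real.log (R1 j k))
        + ε * (∑ k, ∑ l, R2 k l * Real.log (R2 k l)) := by ring
  linarith [kP1, kP2, kR1, kR2, gm1, gm2, zm1, zm2, eqα, eqη, eqβR, eqβPh, ex1, ex2]

lemma rounding2 {m1 m2 m3 : ℕ} (hm1 : 0 < m1) (hm2 : 0 < m2) (hm3 : 0 < m3)
    (a a' : Fin m1 → ℝ) (b b' : Fin m3 → ℝ)
    (Q1 : Matrix (Fin m1) (Fin m2) ℝ) (Q2 : Matrix (Fin m2) (Fin m3) ℝ)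
    (hQ1nn : ∀ j k, 0 ≤ Q1 j k) (hQ2nn : ∀ k l, 0 ≤ Q2 k l)
    (hapos : ∀ j, 0 < a j) (ha'nn : ∀ j, 0 ≤ a' j) (hb'nn : ∀ l, 0 ≤ b' l)
    (hQ1row : ∀ j, ∑ k, Q1 j k = a j) (hQ2col : ∀ l, ∑ k, Q2 k l = b l)
    (hQmid : ∀ k, ∑ j, Q1 j k = ∑ l, Q2 k l)
    (hasum : ∑ j, a j = 1) (hbsum : ∑ l, b l = 1)
    (ha'sum : ∑ j, a' j = 1) (hb'sum : ∑ l, b' l = 1) :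
    ∃ R1 : Matrix (Fin m1) (Fin m2) ℝ, ∃ R2 : Matrix (Fin m2) (Fin m3) ℝ,
      (∀ j k, 0 ≤ R1 j k) ∧ (∀ k l, 0 ≤ R2 k l) ∧ (∀ j, ∑ k, R1 j k = a' j) ∧
      (∀ l, ∑ k, R2 k l = b' l) ∧ (∀ k, ∑ j, R1 j k = ∑ l, R2 k l) ∧
      (∑ j, ∑ k, |R1 j k - Q1 j k|) + (∑ k, ∑ l, |R2 k l - Q2 k l|)
        ≤ 2 * ((∑ j, |a j - a' j|) + (∑ l, |b l - b' l|)) := by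
  classical
  -- scaling factors and intermediate matrices
  set s : Fin m1 → ℝ := fun j => min 1 (a' j / a j) with hs
  set Q1a : Matrix (Fin m1) (Fin m2) ℝ := fun j k => s j * Q1 j k with hQ1adef
  set mm : Fin m2 → ℝ := fun k => ∑ l, Q2 k l with hmm
  set mA : Fin m2 → ℝ := fun k => ∑ j, Q1a j k with hmA
  set Q2a : Matrix (Fin m2) (Fin m3) ℝ := fun k l => (mA k / mm k) * Q2 k l with hQ2adef
  set b1 : Fin m3 → ℝ := fun l => ∑ k, Q2a k l with hb1
  set t : Fin m3 → ℝ := fun l => min 1 (b' l / b1 l) with ht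
  set Q2b : Matrix (Fin m2) (Fin m3) ℝ := fun k l => Q2a k l * t l with hQ2bdef
  set mB : Fin m2 → ℝ := fun k => ∑ l, Q2b k l with hmB
  set Q1b : Matrix (Fin m1) (Fin m2) ℝ := fun j k => Q1a j k * (mB k / mA k) with hQ1bdef
  set a2 : Fin m1 → ℝ := fun j => ∑ k, Q1b j k with ha2
  set b2 : Fin m3 → ℝ := fun l => ∑ k, Q2b k l with hb2
  set w : Fin m2 → ℝ := fun _ => (m2 : ℝ)⁻¹ with hw
  -- basic facts
  have hs0 : ∀ j, 0 ≤ s j := fun j => le_min zero_le_one (div_nonneg (ha'nn j) (hapos j).le)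
  have hs1 : ∀ j, s j ≤ 1 := fun j => min_le_left _ _
  have hwnn : ∀ k : Fin m2, (0:ℝ) ≤ w k := fun k => by rw [hw]; positivity
  have hwsum : ∑ k : Fin m2, w k = 1 := by
    rw [hw, Finset.sum_const, Finset.card_univ, Fintype.card_fin, nsmul_eq_mul]
    exact mul_inv_cancel₀ (by exact_mod_cast hm2.ne')
  have hQ1ann : ∀ j k, 0 ≤ Q1a j k := fun j k => mul_nonneg (hs0 j) (hQ1nn j k)
  have hQ1ale : ∀ j k, Q1a j k ≤ Q1 j k := fun j k => by
    show s j * Q1 j k ≤ Q1 j k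
    calc s j * Q1 j k ≤ 1 * Q1 j k := mul_le_mul_of_nonneg_right (hs1 j) (hQ1nn j k)
      _ = Q1 j k := one_mul _
  have hsa : ∀ j, s j * a j = min (a j) (a' j) := by
    intro j
    simp only [hs]
    rcases le_total (a' j / a j) 1 with h|h
    · rw [min_eq_right h, div_mul_cancel₀ _ (hapos j).ne',
        min_eq_right ((div_le_one (hapos j)).mp h)]
    · rw [min_eq_left h, one_mul, min_eq_left ((one_le_div (hapos j)).mp h)]
  have hQ1arow : ∀ j, ∑ k, Q1a j k = min (a j) (a' j) := by
    intro j
    simp only [hQ1adef]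
    rw [← Finset.mul_sum, hQ1row j, hsa j]
  have hmAnn : ∀ k, 0 ≤ mA k := fun k => Finset.sum_nonneg fun j _ => hQ1ann j k
  have hmALE : ∀ k, mA k ≤ mm k := by
    intro k
    show ∑ j, Q1a j k ≤ ∑ l, Q2 k l
    rw [← hQmid k]
    exact Finset.sum_le_sum fun j _ => hQ1ale j k
  have hmmnn : ∀ k, 0 ≤ mm k := fun k => Finset.sum_nonneg fun l _ => hQ2nn k l
  have hQ2ann : ∀ k l, 0 ≤ Q2a k l := fun k l =>
    mul_nonneg (div_nonneg (hmAnn k) (hmmnn k)) (hQ2nn k l)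
  have hQ2zero : ∀ k, mm k = 0 → ∀ l, Q2 k l = 0 := by
    intro k hk l
    have := (Finset.sum_eq_zero_iff_of_nonneg (fun l _ => hQ2nn k l)).mp hk.symm.symm
    exact this l (Finset.mem_univ l)
  have hQ2ale : ∀ k l, Q2a k l ≤ Q2 k l := by
    intro k l
    show mA k / mm k * Q2 k l ≤ Q2 k l
    rcases eq_or_lt_of_le (hmmnn k) with h|h
    · rw [hQ2zero k h.symm l, mul_zero]
    · calc mA k / mm k * Q2 k l ≤ 1 * Q2 k l :=
          mul_le_mul_of_nonneg_right ((div_le_one h).mpr (hmALE k)) (hQ2nn k l)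
        _ = Q2 k l := one_mul _
  have hQ2arow : ∀ k, ∑ l, Q2a k l = mA k := by
    intro k
    show ∑ l, mA k / mm k * Q2 k l = mA k
    rcases eq_or_lt_of_le (hmmnn k) with h|h
    · have hmA0 : mA k = 0 := le_antisymm (h ▸ hmALE k) (hmAnn k)
      simp [hQ2zero k h.symm, hmA0]
    · rw [← Finset.mul_sum]
      show mA k / mm k * mm k = mA k
      exact div_mul_cancel₀ _ h.ne'
  have hb1nn : ∀ l, 0 ≤ b1 l := fun l => Finset.sum_nonneg fun k _ => hQ2ann k l
  have hb1le : ∀ l, b1 l ≤ b l := by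
    intro l
    show ∑ k, Q2a k l ≤ b l
    rw [← hQ2col l]
    exact Finset.sum_le_sum fun k _ => hQ2ale k l
  have ht0 : ∀ l, 0 ≤ t l := fun l => le_min zero_le_one (div_nonneg (hb'nn l) (hb1nn l))
  have ht1 : ∀ l, t l ≤ 1 := fun l => min_le_left _ _
  have htb : ∀ l, b1 l * t l = min (b1 l) (b' l) := by
    intro l
    rcases eq_or_lt_of_le (hb1nn l) with h|h
    · rw [← h, zero_mul, min_eq_left (h ▸ hb'nn l)]
    · simp only [ht]
      rcases le_total (b' l / b1 l) 1 with h2|h2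
      · rw [min_eq_right h2, mul_div_cancel₀ _ h.ne',
          min_eq_right ((div_le_one h).mp h2)]
      · rw [min_eq_left h2, mul_one, min_eq_left ((one_le_div h).mp h2)]
  have hQ2bnn : ∀ k l, 0 ≤ Q2b k l := fun k l => mul_nonneg (hQ2ann k l) (ht0 l)
  have hQ2ble : ∀ k l, Q2b k l ≤ Q2a k l := by
    intro k l
    show Q2a k l * t l ≤ Q2a k l
    calc Q2a k l * t l ≤ Q2a k l * 1 := mul_le_mul_of_nonneg_left (ht1 l) (hQ2ann k l)
      _ = Q2a k l := mul_one _
  have hb2eq : ∀ l, b2 l = min (b1 l) (b' l) := by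
    intro l
    show ∑ k, Q2a k l * t l = min (b1 l) (b' l)
    rw [← Finset.sum_mul]
    show b1 l * t l = _
    exact htb l
  have hmBnn : ∀ k, 0 ≤ mB k := fun k => Finset.sum_nonneg fun l _ => hQ2bnn k l
  have hmBle : ∀ k, mB k ≤ mA k := by
    intro k
    show ∑ l, Q2b k l ≤ mA k
    rw [← hQ2arow k]
    exact Finset.sum_le_sum fun l _ => hQ2ble k l
  have hQ1azero : ∀ k, mA k = 0 → ∀ j, Q1a j k = 0 := by
    intro k hk j
    exact (Finset.sum_eq_zero_iff_of_nonneg (fun j _ => hQ1ann j k)).mp hk j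
      (Finset.mem_univ j)
  have hQ1bnn : ∀ j k, 0 ≤ Q1b j k := fun j k =>
    mul_nonneg (hQ1ann j k) (div_nonneg (hmBnn k) (hmAnn k))
  have hQ1ble : ∀ j k, Q1b j k ≤ Q1a j k := by
    intro j k
    show Q1a j k * (mB k / mA k) ≤ Q1a j k
    rcases eq_or_lt_of_le (hmAnn k) with h|h
    · rw [hQ1azero k h.symm j, zero_mul]
    · calc Q1a j k * (mB k / mA k) ≤ Q1a j k * 1 :=
          mul_le_mul_of_nonneg_left ((div_le_one h).mpr (hmBle k)) (hQ1ann j k)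
        _ = Q1a j k := mul_one _
  have hQ1bcol : ∀ k, ∑ j, Q1b j k = mB k := by
    intro k
    show ∑ j, Q1a j k * (mB k / mA k) = mB k
    rcases eq_or_lt_of_le (hmAnn k) with h|h
    · have hmB0 : mB k = 0 := le_antisymm (h ▸ hmBle k) (hmBnn k)
      simp [hQ1azero k h.symm, hmB0]
    · rw [← Finset.sum_mul]
      show mA k * (mB k / mA k) = mB k
      rw [mul_div_assoc']
      exact mul_div_cancel_left₀ _ h.ne'
  have ha2le : ∀ j, a2 j ≤ min (a j) (a' j) := by
    intro j
    show ∑ k, Q1b j k ≤ min (a j) (a' j)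
    rw [← hQ1arow j]
    exact Finset.sum_le_sum fun k _ => hQ1ble j k
  have ha2nn : ∀ j, 0 ≤ a2 j := fun j => Finset.sum_nonneg fun k _ => hQ1bnn j k
  have he1nn : ∀ j, 0 ≤ a' j - a2 j := fun j => by
    have := (ha2le j).trans (min_le_right _ _); linarith
  have he2nn : ∀ l, 0 ≤ b' l - b2 l := fun l => by
    have : b2 l ≤ b' l := (hb2eq l) ▸ min_le_right _ _; linarith
  -- total-mass bookkeeping
  have hQ2brow : ∀ k, ∑ l, Q2b k l = mB k := fun k => rfl
  have hsum_mm : ∑ k, mm k = 1 := by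
    show ∑ k : Fin m2, ∑ l, Q2 k l = 1
    rw [show ∑ k : Fin m2, ∑ l, Q2 k l = ∑ l, ∑ k, Q2 k l from Finset.sum_comm]
    simp only [hQ2col]; exact hbsum
  have hsum_mA : ∑ k, mA k = ∑ j, min (a j) (a' j) := by
    show ∑ k : Fin m2, ∑ j, Q1a j k = _
    rw [Finset.sum_comm]
    exact Finset.sum_congr rfl fun j _ => hQ1arow j
  have hsum_b1 : ∑ l, b1 l = ∑ k, mA k := by
    show ∑ l : Fin m3, ∑ k, Q2a k l = _
    rw [Finset.sum_comm]
    exact Finset.sum_congr rfl fun k _ => hQ2arow k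
  have hsum_b2 : ∑ l, b2 l = ∑ k, mB k := by
    show ∑ l : Fin m3, ∑ k, Q2b k l = _
    rw [Finset.sum_comm]
  have hsum_a2 : ∑ j, a2 j = ∑ k, mB k := by
    show ∑ j : Fin m1, ∑ k, Q1b j k = _
    rw [Finset.sum_comm]
    exact Finset.sum_congr rfl fun k _ => hQ1bcol k
  -- the two key scalar quantities
  have habs : ∀ x y : ℝ, x - min x y = (x - y + |x - y|) / 2 := by
    intro x y
    rcases le_total x y with h|h
    · rw [min_eq_left h, abs_of_nonpos (by linarith : x - y ≤ 0)]; ring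
    · rw [min_eq_right h, abs_of_nonneg (by linarith : 0 ≤ x - y)]; ring
  have hP : ∑ j, (a j - min (a j) (a' j)) = (∑ j, |a j - a' j|) / 2 := by
    calc ∑ j, (a j - min (a j) (a' j)) = ∑ j, (a j - a' j + |a j - a' j|) / 2 :=
          Finset.sum_congr rfl fun j _ => habs _ _
      _ = ((∑ j, (a j - a' j)) + ∑ j, |a j - a' j|) / 2 := by
          rw [← Finset.sum_div, Finset.sum_add_distrib]
      _ = (∑ j, |a j - a' j|) / 2 := by
          rw [Finset.sum_sub_distrib, hasum, ha'sum]; ring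
  have hG : ∑ l, (b1 l - b2 l) ≤ (∑ l, |b l - b' l|) / 2 := by
    have step : ∀ l, b1 l - b2 l ≤ (b l - b' l + |b l - b' l|) / 2 := by
      intro l
      rw [hb2eq l, habs (b1 l) (b' l)]
      have h1 : b1 l - b' l ≤ b l - b' l := by have := hb1le l; linarith
      rcases le_total (b1 l - b' l) 0 with h|h
      · rw [abs_of_nonpos h]
        have := neg_abs_le (b l - b' l)
        linarith
      · rw [abs_of_nonneg h, abs_of_nonneg (le_trans h h1)]
        linarith
    calc ∑ l, (b1 l - b2 l) ≤ ∑ l, (b l - b' l + |b l - b' l|) / 2 :=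
          Finset.sum_le_sum fun l _ => step l
      _ = ((∑ l, (b l - b' l)) + ∑ l, |b l - b' l|) / 2 := by
          rw [← Finset.sum_div, Finset.sum_add_distrib]
      _ = (∑ l, |b l - b' l|) / 2 := by
          rw [Finset.sum_sub_distrib, hbsum, hb'sum]; ring
  refine ⟨fun j k => Q1b j k + (a' j - a2 j) * w k,
          fun k l => Q2b k l + w k * (b' l - b2 l), ?_, ?_, ?_, ?_, ?_, ?_⟩
  · intro j k
    exact add_nonneg (hQ1bnn j k) (mul_nonneg (he1nn j) (hwnn k))
  · intro k l
    exact add_nonneg (hQ2bnn k l) (mul_nonneg (hwnn k) (he2nn l))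
  · intro j
    rw [Finset.sum_add_distrib, ← Finset.mul_sum, hwsum, mul_one]
    show a2 j + (a' j - a2 j) = a' j
    ring
  · intro l
    rw [Finset.sum_add_distrib]
    have h2 : ∑ x : Fin m2, w x * (b' l - b2 l) = b' l - b2 l := by
      rw [← Finset.sum_mul, hwsum, one_mul]
    rw [h2]
    show b2 l + (b' l - b2 l) = b' l
    ring
  · intro k
    rw [Finset.sum_add_distrib, Finset.sum_add_distrib, hQ1bcol k]
    show mB k + ∑ j, (a' j - a2 j) * w k = mB k + ∑ l, w k * (b' l - b2 l)
    congr 1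
    rw [← Finset.sum_mul, ← Finset.mul_sum]
    have heq : ∑ j, (a' j - a2 j) = ∑ l, (b' l - b2 l) := by
      rw [Finset.sum_sub_distrib, Finset.sum_sub_distrib, ha'sum, hb'sum, hsum_a2, hsum_b2]
    rw [heq, mul_comm]
  · -- the ℓ¹ error bound
    have bound1 : ∑ j, ∑ k, |Q1b j k + (a' j - a2 j) * w k - Q1 j k|
        ≤ (∑ j, (a j - min (a j) (a' j))) + (∑ k, (mA k - mB k))
          + (∑ j, (a' j - a2 j)) := by
      have pe : ∀ j k, |Q1b j k + (a' j - a2 j) * w k - Q1 j k|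
          ≤ (Q1 j k - Q1a j k) + (Q1a j k - Q1b j k) + (a' j - a2 j) * w k := by
        intro j k
        have h1 := hQ1ale j k
        have h2 := hQ1ble j k
        have h3 := mul_nonneg (he1nn j) (hwnn k)
        rw [abs_le]
        constructor <;> linarith
      calc ∑ j, ∑ k, |Q1b j k + (a' j - a2 j) * w k - Q1 j k|
          ≤ ∑ j, ∑ k, ((Q1 j k - Q1a j k) + (Q1a j k - Q1b j k) + (a' j - a2 j) * w k) :=
            Finset.sum_le_sum fun j _ => Finset.sum_le_sum fun k _ => pe j k
        _ = (∑ j, ∑ k, (Q1 j k - Q1a j k)) + (∑ j, ∑ k, (Q1a j k - Q1b j k))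
            + (∑ j, ∑ k, (a' j - a2 j) * w k) := by
            simp only [Finset.sum_add_distrib]
        _ = (∑ j, (a j - min (a j) (a' j))) + (∑ k, (mA k - mB k))
            + (∑ j, (a' j - a2 j)) := by
            congr 1
            congr 1
            · exact Finset.sum_congr rfl fun j _ => by
                rw [Finset.sum_sub_distrib, hQ1row j, hQ1arow j]
            · rw [Finset.sum_comm]
              exact Finset.sum_congr rfl fun k _ => by
                rw [Finset.sum_sub_distrib, hQ1bcol k]
            · exact Finset.sum_congr rfl fun j _ => by
                rw [← Finset.mul_sum, hwsum, mul_one]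
    have bound2 : ∑ k, ∑ l, |Q2b k l + w k * (b' l - b2 l) - Q2 k l|
        ≤ (∑ k, (mm k - mA k)) + (∑ l, (b1 l - b2 l)) + (∑ l, (b' l - b2 l)) := by
      have pe : ∀ k l, |Q2b k l + w k * (b' l - b2 l) - Q2 k l|
          ≤ (Q2 k l - Q2a k l) + (Q2a k l - Q2b k l) + w k * (b' l - b2 l) := by
        intro k l
        have h1 := hQ2ale k l
        have h2 := hQ2ble k l
        have h3 := mul_nonneg (hwnn k) (he2nn l)
        rw [abs_le]
        constructor <;> linarith
      calc ∑ k, ∑ l, |Q2b k l + w k * (b' l - b2 l) - Q2 k l|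
          ≤ ∑ k, ∑ l, ((Q2 k l - Q2a k l) + (Q2a k l - Q2b k l) + w k * (b' l - b2 l)) :=
            Finset.sum_le_sum fun k _ => Finset.sum_le_sum fun l _ => pe k l
        _ = (∑ k, ∑ l, (Q2 k l - Q2a k l)) + (∑ k, ∑ l, (Q2a k l - Q2b k l))
            + (∑ k, ∑ l, w k * (b' l - b2 l)) := by
            simp only [Finset.sum_add_distrib]
        _ = (∑ k, (mm k - mA k)) + (∑ l, (b1 l - b2 l)) + (∑ l, (b' l - b2 l)) := by
            congr 1
            congr 1
            · exact Finset.sum_congr rfl fun k _ => by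
                rw [Finset.sum_sub_distrib, hQ2arow k]
            · rw [Finset.sum_comm]
              exact Finset.sum_congr rfl fun l _ => by
                rw [Finset.sum_sub_distrib]
            · rw [Finset.sum_comm]
              exact Finset.sum_congr rfl fun l _ => by
                rw [← Finset.sum_mul, hwsum, one_mul]
    have hPs : ∑ j, (a j - min (a j) (a' j)) = 1 - ∑ k, mA k := by
      rw [Finset.sum_sub_distrib, hasum, hsum_mA]
    have hGs : ∑ l, (b1 l - b2 l) = ∑ k, mA k - ∑ k, mB k := by
      rw [Finset.sum_sub_distrib, hsum_b1, hsum_b2]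
    have hDs : ∑ j, (a' j - a2 j) = 1 - ∑ k, mB k := by
      rw [Finset.sum_sub_distrib, ha'sum, hsum_a2]
    have hD2s : ∑ l, (b' l - b2 l) = 1 - ∑ k, mB k := by
      rw [Finset.sum_sub_distrib, hb'sum, hsum_b2]
    have hMMs : ∑ k, (mm k - mA k) = 1 - ∑ k, mA k := by
      rw [Finset.sum_sub_distrib, hsum_mm]
    have hMABs : ∑ k, (mA k - mB k) = ∑ k, mA k - ∑ k, mB k := Finset.sum_sub_distrib _ _
    linarith [bound1, bound2, hP, hG, hPs, hGs, hDs, hD2s, hMMs, hMABs]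

/-- **Approximation guarantee of the Sinkhorn algorithm for `M = 2`** (Thm. 4.8):
with `ε = δ/(2 log(m₁m₂²m₃))`, if the stopping criterion
`S_n ≤ δ/(16 max(‖C¹‖_∞,‖C²‖_∞))` holds at step `n`, then any feasible pair obtained by
rounding the normalized half-step matrices is `δ`-optimal for the (unregularized)
sequentially composed optimal transport problem. -/
theorem sinkhorn_approximation_guarantee_M2
    {m1 m2 m3 : ℕ} (hm1 : 0 < m1) (hm2 : 0 < m2) (hm3 : 0 < m3)
    (C1 : Matrix (Fin m1) (Fin m2) ℝ) (C2 : Matrix (Fin m2) (Fin m3) ℝ)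
    (hC1 : ∀ j k, 0 ≤ C1 j k) (hC2 : ∀ k l, 0 ≤ C2 k l)
    (a : Fin m1 → ℝ) (b : Fin m3 → ℝ)
    (ha : ∀ j, 0 < a j) (hb : ∀ l, 0 < b l)
    (hasum : ∑ j, a j = 1) (hbsum : ∑ l, b l = 1)
    (δ : ℝ) (hδ : 0 < δ)
    (hdim : 2 ≤ m1 * m2 ^ 2 * m3)
    (hCpos : 0 < max (linf C1) (linf C2))
    (ε : ℝ) (hε : ε = δ / (2 * Real.log ((m1 * m2 ^ 2 * m3 : ℕ) : ℝ)))
    (K1 : Matrix (Fin m1) (Fin m2) ℝ) (K2 : Matrix (Fin m2) (Fin m3) ℝ)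
    (hK1 : ∀ j k, K1 j k = Real.exp (-C1 j k / ε))
    (hK2 : ∀ k l, K2 k l = Real.exp (-C2 k l / ε))
    (u1 : ℕ → Fin m1 → ℝ) (u2 : ℕ → Fin m2 → ℝ) (u3 : ℕ → Fin m3 → ℝ)
    (hinit1 : u1 0 = fun _ => 1 / (∑ j, ∑ k, K1 j k))
    (hinit2 : u2 0 = fun _ => 1)
    (hinit3 : u3 0 = fun _ => 1 / (∑ k, ∑ l, K2 k l))
    (hrec2 : ∀ n, u2 (n+1) = fun k => Real.sqrt ((K1ᵀ *ᵥ u1 n) k / (K2 *ᵥ u3 n) k))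
    (hrec1 : ∀ n, u1 (n+1) = fun j => a j / (K1 *ᵥ fun k => (u2 (n+1) k)⁻¹) j)
    (hrec3 : ∀ n, u3 (n+1) = fun l => b l / (K2ᵀ *ᵥ u2 (n+1)) l)
    (n : ℕ)
    (r : Fin m2 → ℝ)
    (hr : r = fun k => Real.sqrt
      (((indMat2 (u2 n) K2 (u3 n)) *ᵥ fun _ => 1) k /
        (((indMat1 (u1 n) K1 (u2 n))ᵀ *ᵥ fun _ => 1) k)))
    (hstop : (∑ j, |a j - (indMat1 (u1 n) K1 (u2 n) *ᵥ r) j|)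
        + (∑ l, |b l - ((indMat2 (u2 n) K2 (u3 n))ᵀ *ᵥ fun k => (r k)⁻¹) l|)
      ≤ δ / (16 * max (linf C1) (linf C2)))
    (ρ : ℝ) (hρ : ρ = ∑ j, ∑ k, u1 n j * K1 j k * (u2 (n+1) k)⁻¹)
    (Ph1 : Matrix (Fin m1) (Fin m2) ℝ) (Ph2 : Matrix (Fin m2) (Fin m3) ℝ)
    (hPh1 : Ph1 = fun j k => (u1 n j / ρ) * K1 j k * (u2 (n+1) k)⁻¹)
    (hPh2 : Ph2 = fun k l => u2 (n+1) k * K2 k l * (u3 n l / ρ))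
    (a' : Fin m1 → ℝ) (b' : Fin m3 → ℝ)
    (ha' : a' = Ph1 *ᵥ fun _ => 1) (hb' : b' = Ph2ᵀ *ᵥ fun _ => 1)
    (Pt1 : Matrix (Fin m1) (Fin m2) ℝ) (Pt2 : Matrix (Fin m2) (Fin m3) ℝ)
    (hPt1nn : ∀ j k, 0 ≤ Pt1 j k) (hPt2nn : ∀ k l, 0 ≤ Pt2 k l)
    (hPt1a : (Pt1 *ᵥ fun _ => 1) = a) (hPt2b : (Pt2ᵀ *ᵥ fun _ => 1) = b)
    (hPtmid : (Pt1ᵀ *ᵥ fun _ => 1) = (Pt2 *ᵥ fun _ => 1))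
    (hPt1err : (∑ j, ∑ k, |Pt1 j k - Ph1 j k|) ≤ 2 * ∑ j, |a j - a' j|)
    (hPt2err : (∑ k, ∑ l, |Pt2 k l - Ph2 k l|) ≤ 2 * ∑ l, |b l - b' l|) :
    ∀ (Q1 : Matrix (Fin m1) (Fin m2) ℝ) (Q2 : Matrix (Fin m2) (Fin m3) ℝ),
      (∀ j k, 0 ≤ Q1 j k) → (∀ k l, 0 ≤ Q2 k l) →
      (Q1 *ᵥ fun _ => 1) = a → (Q2ᵀ *ᵥ fun _ => 1) = b →
      (Q1ᵀ *ᵥ fun _ => 1) = (Q2 *ᵥ fun _ => 1) →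
      (∑ j, ∑ k, C1 j k * Pt1 j k) + (∑ k, ∑ l, C2 k l * Pt2 k l) ≤
        (∑ j, ∑ k, C1 j k * Q1 j k) + (∑ k, ∑ l, C2 k l * Q2 k l) + δ := by
  intro Q1 Q2 hQ1nn hQ2nn hQ1a hQ2b hQmid
  -- notation
  have ne1 : (Finset.univ : Finset (Fin m1)).Nonempty := ⟨⟨0, hm1⟩, Finset.mem_univ _⟩
  have ne2 : (Finset.univ : Finset (Fin m2)).Nonempty := ⟨⟨0, hm2⟩, Finset.mem_univ _⟩
  have ne3 : (Finset.univ : Finset (Fin m3)).Nonempty := ⟨⟨0, hm3⟩, Finset.mem_univ _⟩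
  set M : ℝ := max (linf C1) (linf C2) with hM
  -- epsilon facts
  have hNle : (2:ℝ) ≤ ((m1 * m2 ^ 2 * m3 : ℕ) : ℝ) := by exact_mod_cast hdim
  have hlogN : 0 < Real.log ((m1 * m2 ^ 2 * m3 : ℕ) : ℝ) := Real.log_pos (by linarith)
  have hεpos : 0 < ε := by rw [hε]; positivity
  have hεlog : ε * Real.log ((m1 * m2 ^ 2 * m3 : ℕ) : ℝ) = δ / 2 := by
    rw [hε, div_mul_eq_mul_div, mul_comm (2:ℝ), mul_div_assoc, mul_comm δ,
      div_mul_eq_div_div, div_self (ne_of_gt hlogN), one_div, inv_mul_eq_div]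
  -- positivity of kernels and Sinkhorn vectors
  have hK1pos : ∀ j k, 0 < K1 j k := fun j k => by rw [hK1]; exact Real.exp_pos _
  have hK2pos : ∀ k l, 0 < K2 k l := fun k l => by rw [hK2]; exact Real.exp_pos _
  have hupos : ∀ m, (∀ j, 0 < u1 m j) ∧ (∀ k, 0 < u2 m k) ∧ (∀ l, 0 < u3 m l) := by
    intro m
    induction m with
    | zero =>
      have hs1 : 0 < ∑ j, ∑ k, K1 j k :=
        Finset.sum_pos (fun j _ => Finset.sum_pos (fun k _ => hK1pos j k) ne2) ne1
      have hs2 : 0 < ∑ k, ∑ l, K2 k l :=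
        Finset.sum_pos (fun k _ => Finset.sum_pos (fun l _ => hK2pos k l) ne3) ne2
      refine ⟨fun j => ?_, fun k => ?_, fun l => ?_⟩
      · rw [hinit1]; positivity
      · rw [hinit2]; norm_num
      · rw [hinit3]; positivity
    | succ m ih =>
      obtain ⟨ih1, ih2, ih3⟩ := ih
      have h2 : ∀ k, 0 < u2 (m+1) k := by
        intro k
        have hx : 0 < (K1ᵀ *ᵥ u1 m) k := by
          have : 0 < ∑ j, K1 j k * u1 m j :=
            Finset.sum_pos (fun j _ => mul_pos (hK1pos j k) (ih1 j)) ne1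
          simpa [Matrix.mulVec, dotProduct, Matrix.transpose_apply] using this
        have hy : 0 < (K2 *ᵥ u3 m) k := by
          have : 0 < ∑ l, K2 k l * u3 m l :=
            Finset.sum_pos (fun l _ => mul_pos (hK2pos k l) (ih3 l)) ne3
          simpa [Matrix.mulVec, dotProduct] using this
        simp only [hrec2 m]
        exact Real.sqrt_pos.mpr (div_pos hx hy)
      refine ⟨fun j => ?_, h2, fun l => ?_⟩
      · simp only [hrec1 m]
        have hd : 0 < (K1 *ᵥ fun k => (u2 (m+1) k)⁻¹) j := by
          have : 0 < ∑ k, K1 j k * (u2 (m+1) k)⁻¹ :=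
            Finset.sum_pos (fun k _ => mul_pos (hK1pos j k) (inv_pos.mpr (h2 k))) ne2
          simpa [Matrix.mulVec, dotProduct] using this
        exact div_pos (ha j) hd
      · simp only [hrec3 m]
        have hd : 0 < (K2ᵀ *ᵥ u2 (m+1)) l := by
          have : 0 < ∑ k, K2 k l * u2 (m+1) k :=
            Finset.sum_pos (fun k _ => mul_pos (hK2pos k l) (h2 k)) ne2
          simpa [Matrix.mulVec, dotProduct, Matrix.transpose_apply] using this
        exact div_pos (hb l) hd
  obtain ⟨hu1n, hu2n, hu3n⟩ := hupos n
  obtain ⟨hu1n1, hu2n1, hu3n1⟩ := hupos (n+1)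
  -- the defining square identity of u2 (n+1)
  have hmidpos1 : ∀ k, 0 < ∑ j, K1 j k * u1 n j := fun k =>
    Finset.sum_pos (fun j _ => mul_pos (hK1pos j k) (hu1n j)) ne1
  have hmidpos2 : ∀ k, 0 < ∑ l, K2 k l * u3 n l := fun k =>
    Finset.sum_pos (fun l _ => mul_pos (hK2pos k l) (hu3n l)) ne3
  have hu2sq : ∀ k, u2 (n+1) k ^ 2 * (∑ l, K2 k l * u3 n l) = ∑ j, K1 j k * u1 n j := by
    intro k
    have h := congrFun (hrec2 n) k
    have hX : (K1ᵀ *ᵥ u1 n) k = ∑ j, K1 j k * u1 n j := by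
      simp [Matrix.mulVec, dotProduct, Matrix.transpose_apply]
    have hY : (K2 *ᵥ u3 n) k = ∑ l, K2 k l * u3 n l := by
      simp [Matrix.mulVec, dotProduct]
    rw [hX, hY] at h
    rw [h, Real.sq_sqrt (div_nonneg (hmidpos1 k).le (hmidpos2 k).le)]
    exact div_mul_cancel₀ _ (hmidpos2 k).ne' 
  have hρpos : 0 < ρ := by
    rw [hρ]
    exact Finset.sum_pos (fun j _ => Finset.sum_pos (fun k _ => by
      have := hu1n j; have := hK1pos j k; have := hu2n1 k; positivity) ne2) ne1
  -- entrywise values of Ph and the marginals a', b'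
  have hPh1e : ∀ j k, Ph1 j k = u1 n j / ρ * K1 j k * (u2 (n+1) k)⁻¹ := by
    intro j k; rw [hPh1]
  have hPh2e : ∀ k l, Ph2 k l = u2 (n+1) k * K2 k l * (u3 n l / ρ) := by
    intro k l; rw [hPh2]
  have hPh1pos : ∀ j k, 0 < Ph1 j k := by
    intro j k; rw [hPh1e]
    have := hu1n j; have := hK1pos j k; have := hu2n1 k; positivity
  have hPh2pos : ∀ k l, 0 < Ph2 k l := by
    intro k l; rw [hPh2e]
    have := hu3n l; have := hK2pos k l; have := hu2n1 k; positivity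
  have ha'row : ∀ j, a' j = ∑ k, Ph1 j k := by
    intro j; rw [ha']; simp [Matrix.mulVec, dotProduct]
  have hb'col : ∀ l, b' l = ∑ k, Ph2 k l := by
    intro l; rw [hb']; simp [Matrix.mulVec, dotProduct, Matrix.transpose_apply]
  have ha'pos : ∀ j, 0 < a' j := fun j => by
    rw [ha'row]; exact Finset.sum_pos (fun k _ => hPh1pos j k) ne2
  have hb'pos : ∀ l, 0 < b' l := fun l => by
    rw [hb'col]; exact Finset.sum_pos (fun k _ => hPh2pos k l) ne2
  have ha'sum : ∑ j, a' j = 1 := by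
    simp only [ha'row, hPh1e]
    have he : ∀ j : Fin m1, ∀ k : Fin m2, u1 n j / ρ * K1 j k * (u2 (n+1) k)⁻¹
        = (u1 n j * K1 j k * (u2 (n+1) k)⁻¹) * ρ⁻¹ := fun j k => by ring
    calc ∑ j, ∑ k, u1 n j / ρ * K1 j k * (u2 (n+1) k)⁻¹
        = (∑ j, ∑ k, u1 n j * K1 j k * (u2 (n+1) k)⁻¹) * ρ⁻¹ := by
          rw [Finset.sum_mul]
          exact Finset.sum_congr rfl fun j _ => by
            rw [Finset.sum_mul]; exact Finset.sum_congr rfl fun k _ => he j k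
      _ = ρ * ρ⁻¹ := by rw [← hρ]
      _ = 1 := mul_inv_cancel₀ hρpos.ne' 
  -- middle-marginal consistency of (Ph1, Ph2)
  have hPhmid : ∀ k, ∑ j, Ph1 j k = ∑ l, Ph2 k l := by
    intro k
    simp only [hPh1e, hPh2e]
    have l1 : ∑ j, u1 n j / ρ * K1 j k * (u2 (n+1) k)⁻¹
        = (∑ j, K1 j k * u1 n j) * (u2 (n+1) k)⁻¹ / ρ := by
      rw [Finset.sum_mul, Finset.sum_div]
      exact Finset.sum_congr rfl fun j _ => by ring
    have l2 : ∑ l, u2 (n+1) k * K2 k l * (u3 n l / ρ)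
        = u2 (n+1) k * (∑ l, K2 k l * u3 n l) / ρ := by
      rw [Finset.mul_sum, Finset.sum_div]
      exact Finset.sum_congr rfl fun l _ => by ring
    rw [l1, l2, ← hu2sq k]
    have hu := (hu2n1 k).ne'
    field_simp
  have hb'sum : ∑ l, b' l = 1 := by
    simp only [hb'col]
    rw [Finset.sum_comm]
    calc ∑ k, ∑ l, Ph2 k l = ∑ k, ∑ j, Ph1 j k :=
          Finset.sum_congr rfl fun k _ => (hPhmid k).symm
      _ = ∑ j, ∑ k, Ph1 j k := Finset.sum_comm
      _ = ∑ j, a' j := Finset.sum_congr rfl fun j _ => (ha'row j).symm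
      _ = 1 := ha'sum
  -- the stopping criterion in terms of a', b'
  have hind1 : ∀ j k, indMat1 (u1 n) K1 (u2 n) j k = u1 n j * K1 j k * (u2 n k)⁻¹ := by
    intro j k
    rw [indMat1, Matrix.mul_diagonal, Matrix.diagonal_mul]
  have hind2 : ∀ k l, indMat2 (u2 n) K2 (u3 n) k l = u2 n k * K2 k l * u3 n l := by
    intro k l
    rw [indMat2, Matrix.mul_diagonal, Matrix.diagonal_mul]
  have hrk : ∀ k, r k = u2 n k / u2 (n+1) k := by
    intro k
    have h1 : ((indMat2 (u2 n) K2 (u3 n)) *ᵥ fun _ => (1:ℝ)) k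
        = u2 n k * ∑ l, K2 k l * u3 n l := by
      simp only [Matrix.mulVec, dotProduct, hind2, mul_one, Finset.mul_sum]
      exact Finset.sum_congr rfl fun l _ => by ring
    have h2 : ((indMat1 (u1 n) K1 (u2 n))ᵀ *ᵥ fun _ => (1:ℝ)) k
        = (∑ j, K1 j k * u1 n j) * (u2 n k)⁻¹ := by
      simp only [Matrix.mulVec, dotProduct, Matrix.transpose_apply, hind1, mul_one,
        Finset.sum_mul]
      exact Finset.sum_congr rfl fun j _ => by ring
    have hq : u2 n k * (∑ l, K2 k l * u3 n l) / ((∑ j, K1 j k * u1 n j) * (u2 n k)⁻¹)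
        = (u2 n k / u2 (n+1) k) ^ 2 := by
      rw [← hu2sq k]
      have h3 := (hu2n k).ne'
      have h4 := (hu2n1 k).ne'
      have h5 := (hmidpos2 k).ne'
      field_simp
    rw [hr]
    simp only [h1, h2, hq]
    exact Real.sqrt_sq (div_nonneg (hu2n k).le (hu2n1 k).le)
  have hra : ∀ j, (indMat1 (u1 n) K1 (u2 n) *ᵥ r) j = ρ * a' j := by
    intro j
    rw [ha'row, Finset.mul_sum]
    simp only [Matrix.mulVec, dotProduct, hind1, hrk, hPh1e]
    refine Finset.sum_congr rfl fun k _ => ?_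
    have h3 := (hu2n k).ne'
    have h4 := (hu2n1 k).ne'
    have h5 := hρpos.ne'
    field_simp
  have hrb : ∀ l, ((indMat2 (u2 n) K2 (u3 n))ᵀ *ᵥ fun k => (r k)⁻¹) l = ρ * b' l := by
    intro l
    rw [hb'col, Finset.mul_sum]
    simp only [Matrix.mulVec, dotProduct, Matrix.transpose_apply, hind2, hrk, hPh2e]
    refine Finset.sum_congr rfl fun k _ => ?_
    have h3 := (hu2n k).ne'
    have h4 := (hu2n1 k).ne'
    have h5 := hρpos.ne'
    field_simp
  have hMpos : 0 < M := hCpos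
  set A : ℝ := ∑ j, |a j - a' j| with hA
  set B : ℝ := ∑ l, |b l - b' l| with hB
  have hstop' : (∑ j, |a j - ρ * a' j|) + (∑ l, |b l - ρ * b' l|) ≤ δ / (16 * M) := by
    have e1 : ∑ j, |a j - (indMat1 (u1 n) K1 (u2 n) *ᵥ r) j| = ∑ j, |a j - ρ * a' j| :=
      Finset.sum_congr rfl fun j _ => by rw [hra]
    have e2 : ∑ l, |b l - ((indMat2 (u2 n) K2 (u3 n))ᵀ *ᵥ fun k => (r k)⁻¹) l|
        = ∑ l, |b l - ρ * b' l| := Finset.sum_congr rfl fun l _ => by rw [hrb]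
    rw [← e1, ← e2]
    exact hstop
  have hρ1 : |1 - ρ| ≤ ∑ j, |a j - ρ * a' j| := by
    have : 1 - ρ = ∑ j, (a j - ρ * a' j) := by
      rw [Finset.sum_sub_distrib, hasum, ← Finset.mul_sum, ha'sum, mul_one]
    rw [this]
    exact Finset.abs_sum_le_sum_abs _ _
  have hρ2 : |1 - ρ| ≤ ∑ l, |b l - ρ * b' l| := by
    have : 1 - ρ = ∑ l, (b l - ρ * b' l) := by
      rw [Finset.sum_sub_distrib, hbsum, ← Finset.mul_sum, hb'sum, mul_one]
    rw [this]
    exact Finset.abs_sum_le_sum_abs _ _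
  have hAbound : A ≤ (∑ j, |a j - ρ * a' j|) + |1 - ρ| := by
    have step : ∀ j, |a j - a' j| ≤ |a j - ρ * a' j| + |1 - ρ| * a' j := by
      intro j
      have : a j - a' j = (a j - ρ * a' j) + (ρ - 1) * a' j := by ring
      rw [this]
      refine (abs_add_le _ _).trans ?_
      rw [abs_mul, abs_of_nonneg (ha'pos j).le, abs_sub_comm ρ 1]
    calc A ≤ ∑ j, (|a j - ρ * a' j| + |1 - ρ| * a' j) := Finset.sum_le_sum fun j _ => step j
      _ = (∑ j, |a j - ρ * a' j|) + |1 - ρ| * ∑ j, a' j := by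
          rw [Finset.sum_add_distrib, Finset.mul_sum]
      _ = (∑ j, |a j - ρ * a' j|) + |1 - ρ| := by rw [ha'sum, mul_one]
  have hBbound : B ≤ (∑ l, |b l - ρ * b' l|) + |1 - ρ| := by
    have step : ∀ l, |b l - b' l| ≤ |b l - ρ * b' l| + |1 - ρ| * b' l := by
      intro l
      have : b l - b' l = (b l - ρ * b' l) + (ρ - 1) * b' l := by ring
      rw [this]
      refine (abs_add_le _ _).trans ?_
      rw [abs_mul, abs_of_nonneg (hb'pos l).le, abs_sub_comm ρ 1]
    calc B ≤ ∑ l, (|b l - ρ * b' l| + |1 - ρ| * b' l) := Finset.sum_le_sum fun l _ => step l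
      _ = (∑ l, |b l - ρ * b' l|) + |1 - ρ| * ∑ l, b' l := by
          rw [Finset.sum_add_distrib, Finset.mul_sum]
      _ = (∑ l, |b l - ρ * b' l|) + |1 - ρ| := by rw [hb'sum, mul_one]
  have hABδ : 4 * (M * (A + B)) ≤ δ / 2 := by
    have hSbnn : 0 ≤ ∑ l, |b l - ρ * b' l| := Finset.sum_nonneg fun l _ => abs_nonneg _
    have hAB2 : A + B ≤ 2 * (δ / (16 * M)) := by linarith
    have : M * (A + B) ≤ M * (2 * (δ / (16 * M))) :=
      mul_le_mul_of_nonneg_left hAB2 hMpos.le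
    have heq : M * (2 * (δ / (16 * M))) = δ / 8 := by
      field_simp
      ring
    linarith
  have hAnn : 0 ≤ A := Finset.sum_nonneg (fun j _ => abs_nonneg _)
  have hBnn : 0 ≤ B := Finset.sum_nonneg (fun l _ => abs_nonneg _)
  -- entrywise bound on the costs
  have hC1M : ∀ j k, |C1 j k| ≤ M := by
    intro j k
    refine le_trans ?_ (le_max_left _ _)
    exact le_ciSup (f := fun p : Fin m1 × Fin m2 => |C1 p.1 p.2|)
      (Set.Finite.bddAbove (Set.finite_range _)) ⟨j, k⟩
  have hC2M : ∀ k l, |C2 k l| ≤ M := by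
    intro k l
    refine le_trans ?_ (le_max_right _ _)
    exact le_ciSup (f := fun p : Fin m2 × Fin m3 => |C2 p.1 p.2|)
      (Set.Finite.bddAbove (Set.finite_range _)) ⟨k, l⟩
  -- comparison of Pt with Ph
  have hPtPh : (∑ j, ∑ k, C1 j k * Pt1 j k) + (∑ k, ∑ l, C2 k l * Pt2 k l)
      ≤ (∑ j, ∑ k, C1 j k * Ph1 j k) + (∑ k, ∑ l, C2 k l * Ph2 k l) + 2 * (M * (A + B)) := by
    have h1 := sum_mul_diff_le C1 Pt1 Ph1 M (2 * A) hMpos.le hC1M (by rw [hA]; exact hPt1err)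
    have h2 := sum_mul_diff_le C2 Pt2 Ph2 M (2 * B) hMpos.le hC2M (by rw [hB]; exact hPt2err)
    have h3 : M * (2 * A) + M * (2 * B) = 2 * (M * (A + B)) := by ring
    linarith
  -- marginals of Q
  have hQ1row : ∀ j, ∑ k, Q1 j k = a j := by
    intro j; have := congrFun hQ1a j
    simpa [Matrix.mulVec, dotProduct] using this
  have hQ2col : ∀ l, ∑ k, Q2 k l = b l := by
    intro l; have := congrFun hQ2b l
    simpa [Matrix.mulVec, dotProduct, Matrix.transpose_apply] using this
  have hQmid' : ∀ k, ∑ j, Q1 j k = ∑ l, Q2 k l := by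
    intro k; have := congrFun hQmid k
    simpa [Matrix.mulVec, dotProduct, Matrix.transpose_apply] using this
  -- the rounding of Q to the marginals (a', b')
  obtain ⟨R1, R2, hR1nn, hR2nn, hR1row, hR2col, hRmid, hRerr⟩ :
      ∃ R1 : Matrix (Fin m1) (Fin m2) ℝ, ∃ R2 : Matrix (Fin m2) (Fin m3) ℝ,
        (∀ j k, 0 ≤ R1 j k) ∧ (∀ k l, 0 ≤ R2 k l) ∧ (∀ j, ∑ k, R1 j k = a' j) ∧
        (∀ l, ∑ k, R2 k l = b' l) ∧ (∀ k, ∑ j, R1 j k = ∑ l, R2 k l) ∧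
        (∑ j, ∑ k, |R1 j k - Q1 j k|) + (∑ k, ∑ l, |R2 k l - Q2 k l|) ≤ 2 * (A + B) := by
    exact rounding2 hm1 hm2 hm3 a a' b b' Q1 Q2 hQ1nn hQ2nn ha
      (fun j => (ha'pos j).le) (fun l => (hb'pos l).le) hQ1row hQ2col hQmid'
      hasum hbsum ha'sum hb'sum
  -- comparison of R with Q
  have hRQ : (∑ j, ∑ k, C1 j k * R1 j k) + (∑ k, ∑ l, C2 k l * R2 k l)
      ≤ (∑ j, ∑ k, C1 j k * Q1 j k) + (∑ k, ∑ l, C2 k l * Q2 k l) + 2 * (M * (A + B)) := by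
    have h1 := sum_mul_diff_le C1 R1 Q1 M (∑ j, ∑ k, |R1 j k - Q1 j k|) hMpos.le hC1M le_rfl
    have h2 := sum_mul_diff_le C2 R2 Q2 M (∑ k, ∑ l, |R2 k l - Q2 k l|) hMpos.le hC2M le_rfl
    have h3 : M * (∑ j, ∑ k, |R1 j k - Q1 j k|) + M * (∑ k, ∑ l, |R2 k l - Q2 k l|)
        ≤ M * (2 * (A + B)) := by
      rw [← mul_add]
      exact mul_le_mul_of_nonneg_left hRerr hMpos.le
    have h4 : M * (2 * (A + B)) = 2 * (M * (A + B)) := by ring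
    linarith
  -- comparison of Ph with R via entropic optimality
  have hPhR : (∑ j, ∑ k, C1 j k * Ph1 j k) + (∑ k, ∑ l, C2 k l * Ph2 k l)
      ≤ (∑ j, ∑ k, C1 j k * R1 j k) + (∑ k, ∑ l, C2 k l * R2 k l) + δ / 2 := by
    have hC1K : ∀ j k, C1 j k = -(ε * Real.log (K1 j k)) := by
      intro j k; rw [hK1 j k, Real.log_exp]; field_simp
    have hC2K : ∀ k l, C2 k l = -(ε * Real.log (K2 k l)) := by
      intro k l; rw [hK2 k l, Real.log_exp]; field_simp
    have hopt := entropic_opt ε hεpos C1 K1 Ph1 R1 C2 K2 Ph2 R2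
      (fun j => u1 n j / ρ) (fun k => u2 (n+1) k) (fun l => u3 n l / ρ)
      (fun j => div_pos (hu1n j) hρpos) hu2n1 (fun l => div_pos (hu3n l) hρpos)
      hK1pos hK2pos hC1K hC2K hPh1e hPh2e hR1nn hR2nn
      (fun j => by rw [hR1row j, ha'row j])
      (fun l => by rw [hR2col l, hb'col l])
      hPhmid hRmid
    -- masses
    have hPh1mass : ∑ j, ∑ k, Ph1 j k = 1 := by
      rw [← ha'sum]; exact Finset.sum_congr rfl fun j _ => (ha'row j).symm
    have hPh2mass : ∑ k, ∑ l, Ph2 k l = 1 := by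
      rw [show ∑ k : Fin m2, ∑ l, Ph2 k l = ∑ l, ∑ k, Ph2 k l from Finset.sum_comm, ← hb'sum]
      exact Finset.sum_congr rfl fun l _ => (hb'col l).symm
    have hR1mass : ∑ j, ∑ k, R1 j k = 1 := by
      rw [← ha'sum]; exact Finset.sum_congr rfl fun j _ => hR1row j
    have hR2mass : ∑ k, ∑ l, R2 k l = 1 := by
      rw [show ∑ k : Fin m2, ∑ l, R2 k l = ∑ l, ∑ k, R2 k l from Finset.sum_comm, ← hb'sum]
      exact Finset.sum_congr rfl fun l _ => hR2col l
    -- entropy upper bounds for R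
    have hER1 : (∑ j, ∑ k, R1 j k * Real.log (R1 j k)) ≤ 0 := by
      refine Finset.sum_nonpos fun j _ => Finset.sum_nonpos fun k _ => ?_
      have hle1 : R1 j k ≤ a' j := by
        rw [← hR1row j]
        exact Finset.single_le_sum (fun k' _ => hR1nn j k') (Finset.mem_univ k)
      have hle2 : a' j ≤ 1 := by
        rw [← ha'sum]
        exact Finset.single_le_sum (fun j' _ => (ha'pos j').le) (Finset.mem_univ j)
      exact mul_nonpos_iff.mpr (Or.inl ⟨hR1nn j k,
        Real.log_nonpos (hR1nn j k) (hle1.trans hle2)⟩)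
    have hER2 : (∑ k, ∑ l, R2 k l * Real.log (R2 k l)) ≤ 0 := by
      refine Finset.sum_nonpos fun k _ => Finset.sum_nonpos fun l _ => ?_
      have hle1 : R2 k l ≤ b' l := by
        rw [← hR2col l]
        exact Finset.single_le_sum (fun k' _ => hR2nn k' l) (Finset.mem_univ k)
      have hle2 : b' l ≤ 1 := by
        rw [← hb'sum]
        exact Finset.single_le_sum (fun l' _ => (hb'pos l').le) (Finset.mem_univ l)
      exact mul_nonpos_iff.mpr (Or.inl ⟨hR2nn k l,
        Real.log_nonpos (hR2nn k l) (hle1.trans hle2)⟩)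
    -- entropy lower bounds for Ph
    have hm1m2 : (0:ℝ) < ((m1 * m2 : ℕ) : ℝ) := by
      have : 0 < m1 * m2 := Nat.mul_pos hm1 hm2
      exact_mod_cast this
    have hm2m3 : (0:ℝ) < ((m2 * m3 : ℕ) : ℝ) := by
      have : 0 < m2 * m3 := Nat.mul_pos hm2 hm3
      exact_mod_cast this
    have hEPh1 : -Real.log ((m1 * m2 : ℕ) : ℝ) ≤ ∑ j, ∑ k, Ph1 j k * Real.log (Ph1 j k) := by
      have hconst : ∑ j : Fin m1, ∑ k : Fin m2, (((m1 * m2 : ℕ) : ℝ))⁻¹ = 1 := by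
        simp only [Finset.sum_const, Finset.card_univ, Fintype.card_fin, nsmul_eq_mul]
        push_cast
        have h1 : (m1 : ℝ) ≠ 0 := by exact_mod_cast hm1.ne'
        have h2 : (m2 : ℝ) ≠ 0 := by exact_mod_cast hm2.ne'
        field_simp
      have h1 : ∑ j, ∑ k, (Ph1 j k - (((m1 * m2 : ℕ) : ℝ))⁻¹)
          ≤ ∑ j, ∑ k, (Ph1 j k * Real.log (Ph1 j k)
            - Ph1 j k * Real.log ((((m1 * m2 : ℕ) : ℝ))⁻¹)) :=
        Finset.sum_le_sum fun j _ => Finset.sum_le_sum fun k _ =>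
          gibbs_pt (hPh1pos j k).le (inv_pos.mpr hm1m2)
      have h2 : ∑ j, ∑ k, (Ph1 j k - (((m1 * m2 : ℕ) : ℝ))⁻¹) = 0 := by
        simp only [Finset.sum_sub_distrib]
        rw [hPh1mass, hconst]; ring
      have h3 : ∑ j, ∑ k, (Ph1 j k * Real.log (Ph1 j k)
            - Ph1 j k * Real.log ((((m1 * m2 : ℕ) : ℝ))⁻¹))
          = (∑ j, ∑ k, Ph1 j k * Real.log (Ph1 j k))
            + Real.log ((m1 * m2 : ℕ) : ℝ) := by
        simp only [Finset.sum_sub_distrib]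
        have h4 : ∑ j, ∑ k, Ph1 j k * Real.log ((((m1 * m2 : ℕ) : ℝ))⁻¹)
            = (∑ j, ∑ k, Ph1 j k) * Real.log ((((m1 * m2 : ℕ) : ℝ))⁻¹) := by
          rw [Finset.sum_mul]
          exact Finset.sum_congr rfl fun j _ => by rw [Finset.sum_mul]
        rw [h4, hPh1mass, one_mul, Real.log_inv]; ring
      linarith [h1.trans_eq h3, h2]
    have hEPh2 : -Real.log ((m2 * m3 : ℕ) : ℝ)
        ≤ ∑ k, ∑ l, Ph2 k l * Real.log (Ph2 k l) := by
      have hconst : ∑ k : Fin m2, ∑ l : Fin m3, (((m2 * m3 : ℕ) : ℝ))⁻¹ = 1 := by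
        simp only [Finset.sum_const, Finset.card_univ, Fintype.card_fin, nsmul_eq_mul]
        push_cast
        have h1 : (m2 : ℝ) ≠ 0 := by exact_mod_cast hm2.ne'
        have h2 : (m3 : ℝ) ≠ 0 := by exact_mod_cast hm3.ne'
        field_simp
      have h1 : ∑ k, ∑ l, (Ph2 k l - (((m2 * m3 : ℕ) : ℝ))⁻¹)
          ≤ ∑ k, ∑ l, (Ph2 k l * Real.log (Ph2 k l)
            - Ph2 k l * Real.log ((((m2 * m3 : ℕ) : ℝ))⁻¹)) :=
        Finset.sum_le_sum fun k _ => Finset.sum_le_sum fun l _ =>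
          gibbs_pt (hPh2pos k l).le (inv_pos.mpr hm2m3)
      have h2 : ∑ k, ∑ l, (Ph2 k l - (((m2 * m3 : ℕ) : ℝ))⁻¹) = 0 := by
        simp only [Finset.sum_sub_distrib]
        rw [hPh2mass, hconst]; ring
      have h3 : ∑ k, ∑ l, (Ph2 k l * Real.log (Ph2 k l)
            - Ph2 k l * Real.log ((((m2 * m3 : ℕ) : ℝ))⁻¹))
          = (∑ k, ∑ l, Ph2 k l * Real.log (Ph2 k l))
            + Real.log ((m2 * m3 : ℕ) : ℝ) := by
        simp only [Finset.sum_sub_distrib]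
        have h4 : ∑ k, ∑ l, Ph2 k l * Real.log ((((m2 * m3 : ℕ) : ℝ))⁻¹)
            = (∑ k, ∑ l, Ph2 k l) * Real.log ((((m2 * m3 : ℕ) : ℝ))⁻¹) := by
          rw [Finset.sum_mul]
          exact Finset.sum_congr rfl fun k _ => by rw [Finset.sum_mul]
        rw [h4, hPh2mass, one_mul, Real.log_inv]; ring
      linarith [h1.trans_eq h3, h2]
    -- assembling
    have hlogsum : Real.log ((m1 * m2 : ℕ) : ℝ) + Real.log ((m2 * m3 : ℕ) : ℝ)
        = Real.log ((m1 * m2 ^ 2 * m3 : ℕ) : ℝ) := by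
      rw [← Real.log_mul hm1m2.ne' hm2m3.ne']
      congr 1
      push_cast
      ring
    have hA1 : ε * ((∑ j, ∑ k, R1 j k * Real.log (R1 j k))
        + (∑ k, ∑ l, R2 k l * Real.log (R2 k l))) ≤ 0 :=
      mul_nonpos_iff.mpr (Or.inl ⟨hεpos.le, add_nonpos hER1 hER2⟩)
    have hA2 : -(ε * ((∑ j, ∑ k, Ph1 j k * Real.log (Ph1 j k))
        + (∑ k, ∑ l, Ph2 k l * Real.log (Ph2 k l)))) ≤ δ / 2 := by
      have h5 : ε * (-((∑ j, ∑ k, Ph1 j k * Real.log (Ph1 j k))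
          + (∑ k, ∑ l, Ph2 k l * Real.log (Ph2 k l))))
          ≤ ε * (Real.log ((m1 * m2 : ℕ) : ℝ) + Real.log ((m2 * m3 : ℕ) : ℝ)) :=
        mul_le_mul_of_nonneg_left (by linarith) hεpos.le
      have h6 : ε * (Real.log ((m1 * m2 : ℕ) : ℝ) + Real.log ((m2 * m3 : ℕ) : ℝ)) = δ / 2 := by
        rw [hlogsum]; exact hεlog
      have h7 : -(ε * ((∑ j, ∑ k, Ph1 j k * Real.log (Ph1 j k))
          + (∑ k, ∑ l, Ph2 k l * Real.log (Ph2 k l))))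
          = ε * (-((∑ j, ∑ k, Ph1 j k * Real.log (Ph1 j k))
            + (∑ k, ∑ l, Ph2 k l * Real.log (Ph2 k l)))) := by ring
      linarith
    linarith [hopt, hA1, hA2]
  linarith
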